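/- Fix an integer c ≥ 2 and p ∈ (0,1). Let X₁, …, X_c be i.i.d. Bernoulli(p) random variables, let J be uniformly distributed on {1, …, c} and independent of (X₁, …, X_c), and set Y = X_J (the interleaving attack). Let g_sym be the symmetric Tardos score function: g_sym(0,0,p) = √(p/(1−p)), g_sym(0,1,p) = −√(p/(1−p)), g_sym(1,0,p) = −√((1−p)/p), g_sym(1,1,p) = √((1−p)/p). Then the expected score of the colluder X₁ equals E[g_sym(X₁, Y, p)] = (2/c)·√(p(1−p)). -/

import Mathlib

open MeasureTheory ProbabilityTheory ENNReal

/-- The symmetric Tardos score function of Škorić et al. (with the bit `1` encoded as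
`true` and `0` as `false`): `g_sym(0,0,p) = √(p/(1−p))`, `g_sym(0,1,p) = −√(p/(1−p))`,
`g_sym(1,0,p) = −√((1−p)/p)`, `g_sym(1,1,p) = √((1−p)/p)`. -/
noncomputable def symScore (x y : Bool) (p : ℝ) : ℝ :=
  match x, y with
  | false, false => Real.sqrt (p / (1 - p))
  | false, true => -Real.sqrt (p / (1 - p))
  | true, false => -Real.sqrt ((1 - p) / p)
  | true, true => Real.sqrt ((1 - p) / p)

/-- **Expected symmetric score of a colluder under the interleaving attack.**
Let `X 0, …, X (c−1)` be i.i.d. Bernoulli(`p`), let `J` be uniform on `Fin c` and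
independent of the vector `(X i)ᵢ`, and set `Y = X J` (the interleaving attack).  Then
the expected symmetric Tardos score of the colluder `X 0` is
`E[g_sym(X₁, Y, p)] = (2/c)·√(p(1−p))`. -/
theorem interleaving_symScore_colluder
    {Ω : Type*} [MeasurableSpace Ω] (P : Measure Ω) [IsProbabilityMeasure P]
    (c : ℕ) (hc : 2 ≤ c) (p : ℝ) (hp : p ∈ Set.Ioo (0 : ℝ) 1)
    (X : Fin c → Ω → Bool) (J : Ω → Fin c)
    (hXmeas : ∀ i, Measurable (X i)) (hJmeas : Measurable J)
    (hXbern : ∀ i, P {ω | X i ω = true} = ENNReal.ofReal p)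
    (hXindep : iIndepFun X P)
    (hJunif : ∀ j : Fin c, P {ω | J ω = j} = (c : ℝ≥0∞)⁻¹)
    (hXJindep : IndepFun (fun ω i => X i ω) J P) :
    ∫ ω, symScore (X ⟨0, by omega⟩ ω) (X (J ω) ω) p ∂P
      = (2 / c) * Real.sqrt (p * (1 - p)) := by
  obtain ⟨hp0, hp1⟩ := hp
  have hp1' : (0 : ℝ) < 1 - p := by linarith
  set z : Fin c := ⟨0, by omega⟩ with hz
  set s := Real.sqrt p with hsdef
  set t := Real.sqrt (1 - p) with htdef
  have hs0 : 0 < s := Real.sqrt_pos.mpr hp0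
  have ht0 : 0 < t := Real.sqrt_pos.mpr hp1'
  have hs2 : s ^ 2 = p := Real.sq_sqrt hp0.le
  have ht2 : t ^ 2 = 1 - p := Real.sq_sqrt hp1'.le
  have hcR : (0 : ℝ) < (c : ℝ) := by positivity
  set q : Bool → ℝ := fun b => if b then p else 1 - p with hqdef
  have hq0 : ∀ b, 0 ≤ q b := by
    intro b; cases b <;> simp [hqdef] <;> linarith
  have hmeasX : ∀ (i : Fin c) (b : Bool), MeasurableSet {ω | X i ω = b} :=
    fun i b => (hXmeas i) (measurableSet_singleton b)
  have hmeasJ : ∀ j : Fin c, MeasurableSet {ω | J ω = j} :=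
    fun j => hJmeas (measurableSet_singleton j)
  -- marginal probabilities
  have hPX : ∀ (i : Fin c) (b : Bool), P {ω | X i ω = b} = ENNReal.ofReal (q b) := by
    intro i b
    cases b
    · have hcset : {ω | X i ω = false} = {ω | X i ω = true}ᶜ := by
        ext ω; simp
      rw [hcset, prob_compl_eq_one_sub (hmeasX i true), hXbern i]
      simp only [hqdef, if_neg Bool.false_ne_true]
      rw [ENNReal.ofReal_sub 1 hp0.le, ENNReal.ofReal_one]
    · rw [hXbern i]; simp [hqdef]
  -- pair probabilities
  have hpair : ∀ (j : Fin c) (a b : Bool),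
      P ({ω | X z ω = a} ∩ {ω | X j ω = b})
        = if j = z then (if a = b then ENNReal.ofReal (q a) else 0)
          else ENNReal.ofReal (q a) * ENNReal.ofReal (q b) := by
    intro j a b
    by_cases hjz : j = z
    · subst hjz
      rw [if_pos rfl]
      by_cases hab : a = b
      · subst hab; rw [if_pos rfl, Set.inter_self, hPX]
      · rw [if_neg hab]
        have hempty : {ω | X z ω = a} ∩ {ω | X z ω = b} = ∅ := by
          ext ω
          simp only [Set.mem_inter_iff, Set.mem_setOf_eq, Set.mem_empty_iff_false, iff_false,
            not_and]
          intro h1 h2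
          exact hab (h1 ▸ h2 ▸ rfl)
        rw [hempty, measure_empty]
    · rw [if_neg hjz]
      have hind : IndepFun (X z) (X j) P := hXindep.indepFun (fun h => hjz h.symm)
      have := hind.measure_inter_preimage_eq_mul {a} {b}
        (measurableSet_singleton a) (measurableSet_singleton b)
      have hpre1 : X z ⁻¹' {a} = {ω | X z ω = a} := rfl
      have hpre2 : X j ⁻¹' {b} = {ω | X j ω = b} := rfl
      rw [hpre1, hpre2] at this
      rw [this, hPX, hPX]
  -- triple probabilities
  have hE : ∀ (j : Fin c) (a b : Bool),
      P (({ω | J ω = j} ∩ {ω | X z ω = a}) ∩ {ω | X j ω = b})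
        = (c : ℝ≥0∞)⁻¹ * P ({ω | X z ω = a} ∩ {ω | X j ω = b}) := by
    intro j a b
    have hset : ({ω | J ω = j} ∩ {ω | X z ω = a}) ∩ {ω | X j ω = b}
        = (fun ω i => X i ω) ⁻¹' ({x : Fin c → Bool | x z = a} ∩ {x | x j = b})
            ∩ J ⁻¹' {j} := by
      ext ω
      simp only [Set.mem_inter_iff, Set.mem_setOf_eq, Set.mem_preimage,
        Set.mem_singleton_iff]
      tauto
    have hS : MeasurableSet ({x : Fin c → Bool | x z = a} ∩ {x | x j = b}) := by
      have h1 : Measurable (fun x : Fin c → Bool => x z) := measurable_pi_apply z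
      have h2 : Measurable (fun x : Fin c → Bool => x j) := measurable_pi_apply j
      exact (h1 (measurableSet_singleton a)).inter (h2 (measurableSet_singleton b))
    rw [hset, hXJindep.measure_inter_preimage_eq_mul _ _ hS (measurableSet_singleton j)]
    have hpre : (fun ω i => X i ω) ⁻¹' ({x : Fin c → Bool | x z = a} ∩ {x | x j = b})
        = {ω | X z ω = a} ∩ {ω | X j ω = b} := rfl
    have hpreJ : J ⁻¹' {j} = {ω | J ω = j} := rfl
    rw [hpre, hpreJ, hJunif j, mul_comm]
  -- pointwise decomposition into indicators
  have hpt : (fun ω => symScore (X z ω) (X (J ω) ω) p)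
      = fun ω => ∑ u : Fin c × Bool × Bool,
          Set.indicator (({ω | J ω = u.1} ∩ {ω | X z ω = u.2.1}) ∩ {ω | X u.1 ω = u.2.2})
            (fun _ => symScore u.2.1 u.2.2 p) ω := by
    funext ω
    rw [Fintype.sum_eq_single (⟨J ω, X z ω, X (J ω) ω⟩ : Fin c × Bool × Bool)]
    · rw [Set.indicator_of_mem]
      exact ⟨⟨rfl, rfl⟩, rfl⟩
    · rintro ⟨j, a, b⟩ hu
      rw [Set.indicator_of_notMem]
      rintro ⟨⟨h1, h2⟩, h3⟩
      simp only [Set.mem_setOf_eq] at h1 h2 h3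
      subst h1; subst h2; subst h3
      exact hu rfl
  rw [hpt, integral_finset_sum _ (fun u _ =>
    (integrable_const _).indicator
      (((hmeasJ u.1).inter (hmeasX z u.2.1)).inter (hmeasX u.1 u.2.2)))]
  have hterm : ∀ u : Fin c × Bool × Bool,
      (∫ ω, Set.indicator (({ω | J ω = u.1} ∩ {ω | X z ω = u.2.1}) ∩ {ω | X u.1 ω = u.2.2})
          (fun _ => symScore u.2.1 u.2.2 p) ω ∂P)
        = ((c : ℝ)⁻¹ * (if u.1 = z then (if u.2.1 = u.2.2 then q u.2.1 else 0)
            else q u.2.1 * q u.2.2)) * symScore u.2.1 u.2.2 p := by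
    intro u
    rw [integral_indicator_const _
      (((hmeasJ u.1).inter (hmeasX z u.2.1)).inter (hmeasX u.1 u.2.2)),
      measureReal_def, hE u.1 u.2.1 u.2.2, hpair, smul_eq_mul]
    congr 1
    rw [ENNReal.toReal_mul, ENNReal.toReal_inv, ENNReal.toReal_natCast]
    congr 1
    split_ifs
    · exact ENNReal.toReal_ofReal (hq0 _)
    · simp
    · rw [ENNReal.toReal_mul, ENNReal.toReal_ofReal (hq0 _), ENNReal.toReal_ofReal (hq0 _)]
  simp only [hterm]
  rw [Fintype.sum_prod_type]
  -- per-j inner sum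
  have hsub1 : Real.sqrt (p / (1 - p)) = s / t := Real.sqrt_div hp0.le _
  have hsub2 : Real.sqrt ((1 - p) / p) = t / s := Real.sqrt_div hp1'.le _
  have hsub3 : Real.sqrt (p * (1 - p)) = s * t := Real.sqrt_mul hp0.le _
  have hinner : ∀ j : Fin c,
      (∑ y : Bool × Bool, ((c : ℝ)⁻¹ * (if j = z then (if y.1 = y.2 then q y.1 else 0)
          else q y.1 * q y.2)) * symScore y.1 y.2 p)
        = if j = z then 2 / (c : ℝ) * Real.sqrt (p * (1 - p)) else 0 := by
    intro j
    have hqt : q true = p := by simp [hqdef]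
    have hqf : q false = 1 - p := by simp [hqdef]
    by_cases hjz : j = z
    · simp only [hjz, if_true]
      rw [Fintype.sum_prod_type]
      simp only [Fintype.sum_bool, symScore, hsub1, hsub2, hsub3]
      norm_num [hqt, hqf]
      rw [show p = s ^ 2 from hs2.symm,
        show (1 : ℝ) - s ^ 2 = t ^ 2 by rw [hs2]; exact ht2.symm]
      field_simp
      ring
    · simp only [hjz, if_false]
      rw [Fintype.sum_prod_type]
      simp only [Fintype.sum_bool, symScore, hsub1, hsub2]
      norm_num [hqt, hqf]
      rw [show p = s ^ 2 from hs2.symm,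
        show (1 : ℝ) - s ^ 2 = t ^ 2 by rw [hs2]; exact ht2.symm]
      field_simp
      ring
  simp only [hinner]
  rw [Finset.sum_ite_eq' Finset.univ z
    (fun _ => 2 / (c : ℝ) * Real.sqrt (p * (1 - p))), if_pos (Finset.mem_univ z)]
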